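/- Let p ∈ (0,1) and define φ_p(x) = (1+x)^{-p/2} for x ≥ 0, and Φ_p(x) = φ_p(x) for x ≥ 1, Φ_p(x) = 2φ_p(1) − φ_p(2−x) for 0 ≤ x ≤ 1. Then for all a, b ≥ 0 with (a+b)/2 ≤ 1, (Φ_p(a)+Φ_p(b))/2 ≤ Φ_p((a+b)/2). -/

import Mathlib

noncomputable def phi (p x : ℝ) : ℝ := (1 + x) ^ (-p / 2)

noncomputable def Phi (p x : ℝ) : ℝ :=
  if 1 ≤ x then phi p x else 2 * phi p 1 - phi p (2 - x)

open Real Set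

/-- Convexity inequality for `x ↦ x ^ (-q)` with `q ≥ 0` on positive reals. -/
lemma rpow_neg_convex_ineq {q X Y s t : ℝ} (hq : 0 ≤ q) (hX : 0 < X) (hY : 0 < Y)
    (hs : 0 ≤ s) (ht : 0 ≤ t) (hst : s + t = 1) :
    (s * X + t * Y) ^ (-q) ≤ s * X ^ (-q) + t * Y ^ (-q) := by
  have hZ : 0 < s * X + t * Y := by
    rcases eq_or_lt_of_le hs with h | h
    · have ht1 : t = 1 := by linarith
      have : s * X = 0 := by rw [← h]; ring
      nlinarith
    · nlinarith [mul_nonneg ht hY.le, mul_pos h hX]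
  have hlog : s * Real.log X + t * Real.log Y ≤ Real.log (s * X + t * Y) := by
    have := (strictConcaveOn_log_Ioi.concaveOn).2 (mem_Ioi.2 hX) (mem_Ioi.2 hY) hs ht hst
    simpa [smul_eq_mul] using this
  have hexp := convexOn_exp.2 (mem_univ (Real.log X * (-q))) (mem_univ (Real.log Y * (-q)))
    hs ht hst
  simp only [smul_eq_mul] at hexp
  calc (s * X + t * Y) ^ (-q) = Real.exp (Real.log (s * X + t * Y) * (-q)) :=
        Real.rpow_def_of_pos hZ _
    _ ≤ Real.exp ((s * Real.log X + t * Real.log Y) * (-q)) := by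
        apply Real.exp_le_exp.2
        exact mul_le_mul_of_nonpos_right hlog (neg_nonpos.2 hq)
    _ = Real.exp (s * (Real.log X * (-q)) + t * (Real.log Y * (-q))) := by ring_nf
    _ ≤ s * Real.exp (Real.log X * (-q)) + t * Real.exp (Real.log Y * (-q)) := hexp
    _ = s * X ^ (-q) + t * Y ^ (-q) := by
        rw [Real.rpow_def_of_pos hX, Real.rpow_def_of_pos hY]

/-- Convexity inequality for `phi p`. -/
lemma phi_convex_ineq {p : ℝ} (hp : 0 ≤ p) {x y s t : ℝ} (hx : 0 ≤ x) (hy : 0 ≤ y)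
    (hs : 0 ≤ s) (ht : 0 ≤ t) (hst : s + t = 1) :
    phi p (s * x + t * y) ≤ s * phi p x + t * phi p y := by
  have hq : (0:ℝ) ≤ p / 2 := by linarith
  have hX : (0:ℝ) < 1 + x := by linarith
  have hY : (0:ℝ) < 1 + y := by linarith
  have key := rpow_neg_convex_ineq hq hX hY hs ht hst
  have harg : s * (1 + x) + t * (1 + y) = 1 + (s * x + t * y) := by
    have : s + t = 1 := hst; nlinarith
  rw [harg] at key
  simpa [phi, neg_div] using key

/-- `Phi` agrees with the reflected formula on `[0,1]`, including at `1`. -/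
lemma Phi_eq_of_le {p x : ℝ} (hx : x ≤ 1) : Phi p x = 2 * phi p 1 - phi p (2 - x) := by
  unfold Phi
  by_cases h : 1 ≤ x
  · have hx1 : x = 1 := le_antisymm hx h
    rw [if_pos h, hx1]
    ring_nf
  · rw [if_neg h]

lemma Phi_midpoint_concave_aux {p : ℝ} (hp : p ∈ Set.Ioo (0:ℝ) 1)
    {a b : ℝ} (ha : 0 ≤ a) (hb : 0 ≤ b) (hab : (a + b) / 2 ≤ 1) (hle : a ≤ b) :
    (Phi p a + Phi p b) / 2 ≤ Phi p ((a + b) / 2) := by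
  obtain ⟨hp0, hp1⟩ := hp
  have hm : (a + b) / 2 ≤ 1 := hab
  have ha1 : a ≤ 1 := by linarith
  by_cases hb1 : b ≤ 1
  · -- both points in [0,1]
    rw [Phi_eq_of_le ha1, Phi_eq_of_le hb1, Phi_eq_of_le hm]
    have key := phi_convex_ineq hp0.le (x := 2 - a) (y := 2 - b) (s := 1/2) (t := 1/2)
      (by linarith) (by linarith) (by norm_num) (by norm_num) (by norm_num)
    have harg : (1:ℝ)/2 * (2 - a) + 1/2 * (2 - b) = 2 - (a + b) / 2 := by ring
    rw [harg] at key
    linarith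
  · -- b > 1, a < 1
    push_neg at hb1
    have hab2 : a + b ≤ 2 := by linarith
    have ha1' : a < 1 := by linarith
    have hden : (0:ℝ) < 1 - a := by linarith
    set L : ℝ := (2 - a - b) / (2 * (1 - a)) with hL
    set U : ℝ := (b - 1) / (1 - a) with hU
    have hL0 : 0 ≤ L := by
      apply div_nonneg (by linarith) (by linarith)
    have hL1 : L ≤ 1 := by
      rw [hL, div_le_one (by linarith)]
      linarith
    have hU0 : 0 ≤ U := by
      apply div_nonneg (by linarith) (by linarith)
    have hU1 : U ≤ 1 := by
      rw [hU, div_le_one hden]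
      linarith
    have h1 := phi_convex_ineq hp0.le (x := 2 - a) (y := 1) (s := L) (t := 1 - L)
      (by linarith) (by norm_num) hL0 (by linarith) (by ring)
    have h2 := phi_convex_ineq hp0.le (x := 2 - a) (y := 1) (s := U) (t := 1 - U)
      (by linarith) (by norm_num) hU0 (by linarith) (by ring)
    have harg1 : L * (2 - a) + (1 - L) * 1 = 2 - (a + b) / 2 := by
      rw [hL]
      field_simp
      ring
    have harg2 : U * (2 - a) + (1 - U) * 1 = b := by
      rw [hU]
      field_simp
      ring
    rw [harg1] at h1
    rw [harg2] at h2
    have hLU : U = 1 - 2 * L := by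
      rw [hU, hL]
      field_simp
      ring
    rw [hLU] at h2
    rw [Phi_eq_of_le ha1, Phi_eq_of_le hm]
    have hPb : Phi p b = phi p b := by
      unfold Phi; rw [if_pos hb1.le]
    rw [hPb]
    nlinarith [h1, h2]

theorem Phi_midpoint_concave {p : ℝ} (hp : p ∈ Set.Ioo (0:ℝ) 1)
    {a b : ℝ} (ha : 0 ≤ a) (hb : 0 ≤ b) (hab : (a + b) / 2 ≤ 1) :
    (Phi p a + Phi p b) / 2 ≤ Phi p ((a + b) / 2) := by
  rcases le_total a b with h | h
  · exact Phi_midpoint_concave_aux hp ha hb hab h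
  · have := Phi_midpoint_concave_aux hp hb ha (by linarith) h
    rw [add_comm b a] at this
    linarith
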